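/- Let Γ be a finite set of at most n complex numbers where every element is (N,ρ)-linked to some element of Γ, and let E ⊆ Γ be a chain-linked equivalence class containing no (N,ρ)-loop of odd length. Then E admits a partition E = Σ₁ ∪ Σ₂ such that: (i) no two elements of Σ₁ are (N,ρ)-linked, and no two elements of Σ₂ are (N,ρ)-linked; (ii) for any β, γ both in Σ₁ (or both in Σ₂), β and γ̄ are (nN, nρ)-linked; (iii) for β ∈ Σ₁ and γ ∈ Σ₂, β and γ are (nN, nρ)-linked. -/

import Mathlib

open Complex

/-- `α` and `β` are `(N,ρ)`-linked: `|2πi⟨k,ω⟩ - (α - β̄)| < ρ` for some `|k| ≤ N`. -/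
def NLinked {d : ℕ} (ω : Fin d → ℝ) (N : ℕ) (ρ : ℝ) (α β : ℂ) : Prop :=
  ∃ k : Fin d → ℤ, (∑ i, |k i| : ℤ) ≤ (N : ℤ) ∧
    ‖(2 * Real.pi * Complex.I * (∑ i, (k i : ℝ) * ω i)
      - (α - (starRingEnd ℂ) β))‖ < ρ

/-- An `(N,ρ)`-chain in a set `S`: a nonempty list of elements of `S` with consecutive
elements `(N,ρ)`-linked. -/
def NChainIn {d : ℕ} (ω : Fin d → ℝ) (N : ℕ) (ρ : ℝ) (S : Finset ℂ) (c : List ℂ) : Prop :=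
  c ≠ [] ∧ (∀ x ∈ c, x ∈ S) ∧ c.Chain' (NLinked ω N ρ)

/-- `α` and `β` are `(N,ρ)`-chain-linked in `S`. -/
def NChainLinked {d : ℕ} (ω : Fin d → ℝ) (N : ℕ) (ρ : ℝ) (S : Finset ℂ) (α β : ℂ) : Prop :=
  ∃ c : List ℂ, NChainIn ω N ρ S c ∧ c.head? = some α ∧ c.getLast? = some β

namespace NOL
variable {d : ℕ} {ω : Fin d → ℝ} {N : ℕ} {ρ : ℝ}

lemma nlinked_symm {α β : ℂ} (h : NLinked ω N ρ α β) : NLinked ω N ρ β α := by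
  obtain ⟨k, h1, h2⟩ := h
  refine ⟨k, h1, ?_⟩
  have key : (2 * Real.pi * Complex.I * ((∑ i, (k i : ℝ) * ω i : ℝ) : ℂ)
      - (β - (starRingEnd ℂ) α))
      = -((starRingEnd ℂ) (2 * Real.pi * Complex.I * ((∑ i, (k i : ℝ) * ω i : ℝ) : ℂ)
        - (α - (starRingEnd ℂ) β))) := by
    simp only [map_sub, map_mul, Complex.conj_ofReal, Complex.conj_I, map_ofNat,
      Complex.conj_conj]
    push_cast
    ring
  rw [key, norm_neg, Complex.norm_conj]
  exact h2

/-- A walk of `m` links in `S`. -/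
def Walk (ω : Fin d → ℝ) (N : ℕ) (ρ : ℝ) (S : Finset ℂ) (m : ℕ) (β γ : ℂ) : Prop :=
  ∃ g : ℕ → ℂ, g 0 = β ∧ g m = γ ∧ (∀ i ≤ m, g i ∈ S) ∧
    ∀ i < m, NLinked ω N ρ (g i) (g (i+1))

variable {S : Finset ℂ} {m m' : ℕ} {β γ δ : ℂ}

lemma walk_mem_left (h : Walk ω N ρ S m β γ) : β ∈ S := by
  obtain ⟨g, h0, hm, hmem, _⟩ := h
  rw [← h0]; exact hmem 0 (Nat.zero_le _)

lemma walk_mem_right (h : Walk ω N ρ S m β γ) : γ ∈ S := by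
  obtain ⟨g, h0, hm, hmem, _⟩ := h
  rw [← hm]; exact hmem m le_rfl

lemma walk_refl (h : β ∈ S) : Walk ω N ρ S 0 β β :=
  ⟨fun _ => β, rfl, rfl, fun _ _ => h, fun i hi => absurd hi (Nat.not_lt_zero i)⟩

lemma walk_single (hβ : β ∈ S) (hγ : γ ∈ S) (h : NLinked ω N ρ β γ) :
    Walk ω N ρ S 1 β γ := by
  refine ⟨fun t => if t = 0 then β else γ, by simp, by simp, ?_, ?_⟩
  · intro i _; by_cases hi : i = 0 <;> simp [hi, hβ, hγ]
  · intro i hi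
    interval_cases i
    simpa using h

lemma walk_symm (h : Walk ω N ρ S m β γ) : Walk ω N ρ S m γ β := by
  obtain ⟨g, h0, hm, hmem, hlink⟩ := h
  refine ⟨fun t => g (m - t), by simpa, by simpa, ?_, ?_⟩
  · intro i _; exact hmem _ (Nat.sub_le _ _)
  · intro i hi
    simp only []
    have h1 : m - i = (m - (i+1)) + 1 := by omega
    rw [h1]
    exact nlinked_symm (hlink (m - (i+1)) (by omega))

lemma walk_trans (h : Walk ω N ρ S m β γ) (h' : Walk ω N ρ S m' γ δ) :
    Walk ω N ρ S (m + m') β δ := by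
  obtain ⟨g, h0, hm, hmem, hlink⟩ := h
  obtain ⟨g', h0', hm', hmem', hlink'⟩ := h'
  refine ⟨fun t => if t ≤ m then g t else g' (t - m), by simp [h0], ?_, ?_, ?_⟩
  · by_cases hm0 : m' = 0
    · simp only [hm0, Nat.add_zero, le_refl, if_pos]
      rw [hm]; rw [hm0] at hm'; rw [← hm', h0']
    · have : ¬ (m + m' ≤ m) := by omega
      simp only [this, if_false, Nat.add_sub_cancel_left, hm']
  · intro i _
    by_cases hi : i ≤ m
    · simp only [hi, if_pos]; exact hmem i hi
    · simp only [hi, if_neg, if_false]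
      exact hmem' _ (by omega)
  · intro i hi
    by_cases hi1 : i + 1 ≤ m
    · have hi0 : i ≤ m := by omega
      simp only [hi0, hi1, if_pos]
      exact hlink i (by omega)
    · by_cases hi0 : i ≤ m
      · have hie : i = m := by omega
        have e1 : (fun t => if t ≤ m then g t else g' (t - m)) i = g' 0 := by
          simp only [hie, le_refl, if_pos, hm, ← h0']
        have e2 : (fun t => if t ≤ m then g t else g' (t - m)) (i+1) = g' 1 := by
          have : ¬ (i + 1 ≤ m) := hi1
          simp only [this, if_false, hie, Nat.add_sub_cancel_left]
          norm_num
        rw [e1, e2]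
        exact hlink' 0 (by omega)
      · simp only [hi0, hi1, if_neg, if_false]
        have e2 : i + 1 - m = (i - m) + 1 := by omega
        rw [e2]
        exact hlink' (i - m) (by omega)

lemma walk_of_chain {c : List ℂ} (hc : NChainIn ω N ρ S c)
    (hh : c.head? = some β) (hl : c.getLast? = some γ) :
    Walk ω N ρ S (c.length - 1) β γ := by
  obtain ⟨hne, hmem, hch⟩ := hc
  have hlen : 0 < c.length := List.length_pos_iff.2 hne
  refine ⟨fun i => c.getD i 0, ?_, ?_, ?_, ?_⟩
  · show c.getD 0 0 = β
    rw [List.getD_eq_getElem c 0 hlen]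
    rw [List.head?_eq_getElem?, List.getElem?_eq_getElem hlen] at hh
    simpa using hh
  · show c.getD (c.length - 1) 0 = γ
    have h2 : c.length - 1 < c.length := by omega
    rw [List.getD_eq_getElem c 0 h2]
    rw [List.getLast?_eq_getElem?, List.getElem?_eq_getElem h2] at hl
    simpa using hl
  · intro i hi
    show c.getD i 0 ∈ S
    have h2 : i < c.length := by omega
    rw [List.getD_eq_getElem c 0 h2]
    exact hmem _ (List.getElem_mem h2)
  · intro i hi
    show NLinked ω N ρ (c.getD i 0) (c.getD (i+1) 0)
    have h2 : i < c.length := by omega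
    have h3 : i + 1 < c.length := by omega
    rw [List.getD_eq_getElem c 0 h2, List.getD_eq_getElem c 0 h3]
    exact List.isChain_iff_getElem.1 hch i (by omega)

lemma chain_of_walk (h : Walk ω N ρ S m β γ) :
    ∃ c : List ℂ, NChainIn ω N ρ S c ∧ c.head? = some β ∧ c.getLast? = some γ ∧
      c.length = m + 1 := by
  obtain ⟨g, h0, hm, hmem, hlink⟩ := h
  refine ⟨List.ofFn (fun j : Fin (m+1) => g j), ⟨?_, ?_, ?_⟩, ?_, ?_, by simp⟩
  · simp [List.ofFn_eq_nil_iff]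
  · intro x hx
    obtain ⟨i, hi⟩ := List.mem_ofFn.1 hx
    rw [← hi]
    exact hmem _ (by omega)
  · apply List.isChain_iff_getElem.2
    intro i hi
    simp only [List.length_ofFn] at hi
    rw [List.getElem_ofFn, List.getElem_ofFn]
    exact hlink i (by omega)
  · have hlen : 0 < (List.ofFn (fun j : Fin (m+1) => g j)).length := by simp
    rw [List.head?_eq_getElem?, List.getElem?_eq_getElem hlen, List.getElem_ofFn]
    simp [h0]
  · have hlen : (List.ofFn (fun j : Fin (m+1) => g j)).length - 1 <
        (List.ofFn (fun j : Fin (m+1) => g j)).length := by simp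
    rw [List.getLast?_eq_getElem?, List.getElem?_eq_getElem hlen, List.getElem_ofFn]
    simp [hm]

lemma walk_splice (g : ℕ → ℂ) (i j : ℕ) (hij : i < j) (hjm : j ≤ m) (hgij : g i = g j)
    (h0 : g 0 = β) (hm : g m = γ) (hmem : ∀ t ≤ m, g t ∈ S)
    (hlink : ∀ t < m, NLinked ω N ρ (g t) (g (t+1))) :
    Walk ω N ρ S (m - (j - i)) β γ := by
  refine ⟨fun t => if t ≤ i then g t else g (t + (j - i)), by simp [h0], ?_, ?_, ?_⟩
  · show (if m - (j - i) ≤ i then g (m - (j - i)) else g (m - (j - i) + (j - i))) = γ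
    by_cases hc : m - (j - i) ≤ i
    · have h1 : m = j := by omega
      have h2 : m - (j - i) = i := by omega
      rw [if_pos hc, h2, hgij, ← h1, hm]
    · have h2 : m - (j - i) + (j - i) = m := by omega
      rw [if_neg hc, h2, hm]
  · intro t ht
    show (if t ≤ i then g t else g (t + (j - i))) ∈ S
    by_cases hc : t ≤ i
    · rw [if_pos hc]; exact hmem t (by omega)
    · rw [if_neg hc]; exact hmem _ (by omega)
  · intro t ht
    show NLinked ω N ρ (if t ≤ i then g t else g (t + (j - i)))
      (if t + 1 ≤ i then g (t+1) else g (t + 1 + (j - i)))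
    by_cases hc1 : t + 1 ≤ i
    · rw [if_pos (by omega : t ≤ i), if_pos hc1]
      exact hlink t (by omega)
    · by_cases hc2 : t ≤ i
      · have hti : t = i := by omega
        rw [if_pos hc2, if_neg hc1, hti, hgij]
        have he : i + (j - i) = j := by omega
        have : NLinked ω N ρ (g j) (g (j + 1)) := hlink j (by omega)
        have he2 : i + 1 + (j - i) = j + 1 := by omega
        rw [he2]
        exact this
      · rw [if_neg hc2, if_neg hc1]
        have he : t + 1 + (j - i) = (t + (j - i)) + 1 := by omega
        rw [he]
        exact hlink _ (by omega)

lemma walk_shorten (h : Walk ω N ρ S m β γ) : ∃ m' < S.card, Walk ω N ρ S m' β γ := by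
  induction m using Nat.strong_induction_on generalizing β γ with
  | _ m IH =>
  by_cases hlt : m < S.card
  · exact ⟨m, hlt, h⟩
  · obtain ⟨g, h0, hm, hmem, hlink⟩ := h
    have hcard : S.card < (Finset.univ : Finset (Fin (m+1))).card := by
      simp; omega
    obtain ⟨i, -, j, -, hij, hgij⟩ :=
      Finset.exists_ne_map_eq_of_card_lt_of_maps_to hcard
        (fun (i : Fin (m+1)) _ => hmem i (by omega))
    have hijne : (i : ℕ) ≠ (j : ℕ) := fun hc => hij (Fin.ext hc)
    rcases lt_or_gt_of_ne hijne with hlt' | hlt'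
    · exact IH (m - (j - i)) (by omega)
        (walk_splice g i j hlt' (by omega) hgij h0 hm hmem hlink)
    · exact IH (m - (i - j)) (by omega)
        (walk_splice g j i hlt' (by omega) hgij.symm h0 hm hmem hlink)

lemma walk_telescope (hm : 1 ≤ m) (h : Walk ω N ρ S m β γ) (hρ : 0 < ρ) :
    ∃ k : Fin d → ℤ, (∑ i, |k i| : ℤ) ≤ (m * N : ℤ) ∧
      ‖(2 * Real.pi * Complex.I * ((∑ i, (k i : ℝ) * ω i : ℝ) : ℂ)
        - (β - (if m % 2 = 1 then (starRingEnd ℂ) γ else γ)))‖ < m * ρ := by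
  induction m, hm using Nat.le_induction generalizing β with
  | base =>
    obtain ⟨g, h0, h1, hmem, hlink⟩ := h
    have := hlink 0 (by omega)
    rw [h0, h1] at this
    obtain ⟨k, hk, habs⟩ := this
    refine ⟨k, by simpa using hk, ?_⟩
    simpa using habs
  | succ m hm IH =>
    obtain ⟨g, h0, hgm, hmem, hlink⟩ := h
    have hlink0 := hlink 0 (by omega)
    rw [h0] at hlink0
    obtain ⟨a, ha, haabs⟩ := hlink0
    have htail : Walk ω N ρ S m (g 1) γ :=
      ⟨fun t => g (t+1), rfl, hgm, fun i hi => hmem _ (by omega),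
        fun i hi => hlink (i+1) (by omega)⟩
    obtain ⟨K, hK, hKabs⟩ := IH htail
    refine ⟨fun i => a i - K i, ?_, ?_⟩
    · calc (∑ i, |a i - K i| : ℤ) ≤ ∑ i, (|a i| + |K i|) :=
            Finset.sum_le_sum fun i _ => abs_sub (a i) (K i)
        _ = (∑ i, |a i|) + (∑ i, |K i|) := Finset.sum_add_distrib
        _ ≤ (N : ℤ) + m * N := add_le_add ha hK
        _ = ((m + 1 : ℕ) * N : ℤ) := by push_cast; ring
    · set T : ℂ := if m % 2 = 1 then (starRingEnd ℂ) γ else γ with hT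
      set T' : ℂ := if (m + 1) % 2 = 1 then (starRingEnd ℂ) γ else γ with hT'
      have hTT : (starRingEnd ℂ) T = T' := by
        rcases Nat.even_or_odd m with he | ho
        · have h1 : m % 2 = 0 := Nat.even_iff.1 he
          have h2 : (m + 1) % 2 = 1 := by omega
          simp [hT, hT', h1, h2]
        · have h1 : m % 2 = 1 := Nat.odd_iff.1 ho
          have h2 : ¬ ((m + 1) % 2 = 1) := by omega
          simp [hT, hT', h1, h2]
      have hsum : ((∑ i, ((a i - K i : ℤ) : ℝ) * ω i : ℝ) : ℂ)
          = ((∑ i, (a i : ℝ) * ω i : ℝ) : ℂ) - ((∑ i, (K i : ℝ) * ω i : ℝ) : ℂ) := by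
        push_cast
        rw [← Finset.sum_sub_distrib]
        congr 1
        ext i
        ring
      have keyeq : 2 * Real.pi * Complex.I * ((∑ i, ((a i - K i : ℤ) : ℝ) * ω i : ℝ) : ℂ)
          - (β - T')
          = (2 * Real.pi * Complex.I * ((∑ i, (a i : ℝ) * ω i : ℝ) : ℂ)
              - (β - (starRingEnd ℂ) (g 1)))
            + (starRingEnd ℂ) (2 * Real.pi * Complex.I * ((∑ i, (K i : ℝ) * ω i : ℝ) : ℂ)
              - (g 1 - T)) := by
        rw [hsum, ← hTT]
        simp only [map_sub, map_mul, Complex.conj_ofReal, Complex.conj_I, map_ofNat]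
        ring
      calc ‖(2 * Real.pi * Complex.I
              * ((∑ i, ((a i - K i : ℤ) : ℝ) * ω i : ℝ) : ℂ) - (β - T'))‖
          ≤ ‖(2 * Real.pi * Complex.I * ((∑ i, (a i : ℝ) * ω i : ℝ) : ℂ)
              - (β - (starRingEnd ℂ) (g 1)))‖
            + ‖((starRingEnd ℂ) (2 * Real.pi * Complex.I
              * ((∑ i, (K i : ℝ) * ω i : ℝ) : ℂ) - (g 1 - T)))‖ := by
            rw [keyeq]; exact norm_add_le _ _
        _ < ρ + m * ρ := by
            rw [Complex.norm_conj]
            exact add_lt_add haabs hKabs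
        _ = ((m + 1 : ℕ) : ℝ) * ρ := by push_cast; ring

end NOL

/-- If the chain-linked equivalence class `E` contains no odd `(N,ρ)`-loop,
then `E` splits into `S₁ ∪ S₂` with: no two elements of the same part `(N,ρ)`-linked;
any two elements of the same part `(nN,nρ)`-linked after conjugating one of them; and any
element of `S₁` `(nN,nρ)`-linked to any element of `S₂`. -/
theorem no_odd_loop_partition
    (d n N : ℕ) (ρ : ℝ) (hρ : 0 < ρ) (ω : Fin d → ℝ)
    (Γ : Finset ℂ) (hcard : Γ.card ≤ n)
    (hstar : ∀ α ∈ Γ, ∃ β ∈ Γ, NLinked ω N ρ α β)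
    (α₀ : ℂ) (hα₀ : α₀ ∈ Γ)
    (E : Finset ℂ)
    (hE : ∀ β, β ∈ E ↔ β ∈ Γ ∧ NChainLinked ω N ρ Γ α₀ β)
    (hnoloop : ¬ ∃ c : List ℂ, NChainIn ω N ρ E c ∧ c.head? = c.getLast? ∧
      2 ≤ c.length ∧ Odd (c.length - 1)) :
    ∃ S₁ S₂ : Finset ℂ, S₁ ∪ S₂ = E ∧ Disjoint S₁ S₂ ∧
      (∀ β ∈ S₁, ∀ γ ∈ S₁, ¬ NLinked ω N ρ β γ) ∧
      (∀ β ∈ S₂, ∀ γ ∈ S₂, ¬ NLinked ω N ρ β γ) ∧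
      (∀ β ∈ S₁, ∀ γ ∈ S₁, NLinked ω (n * N) (n * ρ) β ((starRingEnd ℂ) γ)) ∧
      (∀ β ∈ S₂, ∀ γ ∈ S₂, NLinked ω (n * N) (n * ρ) β ((starRingEnd ℂ) γ)) ∧
      (∀ β ∈ S₁, ∀ γ ∈ S₂, NLinked ω (n * N) (n * ρ) β γ) := by
  classical
  have hn1 : 1 ≤ n := le_trans (Finset.one_le_card.mpr ⟨α₀, hα₀⟩) hcard
  have hEsub : E ⊆ Γ := fun β hβ => ((hE β).1 hβ).1
  have hcardE : E.card ≤ n := le_trans (Finset.card_le_card hEsub) hcard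
  have hloopW : ∀ (β : ℂ) (m : ℕ), NOL.Walk ω N ρ E m β β → m % 2 = 0 := by
    intro β m w
    by_contra hodd
    obtain ⟨c, hc, hh, hl, hlen⟩ := NOL.chain_of_walk w
    refine hnoloop ⟨c, hc, hh.trans hl.symm, by omega, ?_⟩
    rw [hlen]
    simpa using Nat.odd_iff.2 (by omega)
  have hpar : ∀ (β γ : ℂ) (m m' : ℕ), NOL.Walk ω N ρ E m β γ → NOL.Walk ω N ρ E m' β γ →
      m % 2 = m' % 2 := by
    intro β γ m m' w w'
    have := hloopW β (m + m') (NOL.walk_trans w (NOL.walk_symm w'))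
    omega
  have hmemE : ∀ (β : ℂ) (m : ℕ), NOL.Walk ω N ρ Γ m α₀ β → β ∈ E := by
    intro β m w
    obtain ⟨c, hc, hh, hl, -⟩ := NOL.chain_of_walk w
    exact (hE β).2 ⟨NOL.walk_mem_right w, c, hc, hh, hl⟩
  have hwalkE : ∀ (β : ℂ) (m : ℕ), NOL.Walk ω N ρ Γ m α₀ β → NOL.Walk ω N ρ E m α₀ β := by
    intro β m w
    obtain ⟨g, h0, hgm, hmem, hlink⟩ := w
    refine ⟨g, h0, hgm, ?_, hlink⟩
    intro i hi
    exact hmemE (g i) i ⟨g, h0, rfl, fun j hj => hmem j (le_trans hj hi),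
      fun j hj => hlink j (lt_of_lt_of_le hj hi)⟩
  have hreach : ∀ β ∈ E, ∃ m, NOL.Walk ω N ρ E m α₀ β := by
    intro β hβ
    obtain ⟨-, c, hc, hh, hl⟩ := (hE β).1 hβ
    exact ⟨c.length - 1, hwalkE β _ (NOL.walk_of_chain hc hh hl)⟩
  set S₁ := E.filter (fun β => ∃ m, m % 2 = 0 ∧ NOL.Walk ω N ρ E m α₀ β) with hS₁def
  set S₂ := E \ S₁ with hS₂def
  have hS1sub : S₁ ⊆ E := Finset.filter_subset _ _
  have hs1 : ∀ β ∈ S₁, β ∈ E ∧ ∃ m, m % 2 = 0 ∧ NOL.Walk ω N ρ E m α₀ β := by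
    intro β hβ
    exact Finset.mem_filter.1 hβ
  have hs2 : ∀ β ∈ S₂, β ∈ E ∧ ∃ m, m % 2 = 1 ∧ NOL.Walk ω N ρ E m α₀ β := by
    intro β hβ
    have hβE : β ∈ E := (Finset.mem_sdiff.1 hβ).1
    have hnot := (Finset.mem_sdiff.1 hβ).2
    obtain ⟨m, w⟩ := hreach β hβE
    refine ⟨hβE, m, ?_, w⟩
    by_contra h
    exact hnot (Finset.mem_filter.2 ⟨hβE, m, by omega, w⟩)
  have hnpos : (0 : ℝ) < (n : ℝ) * ρ := by
    have : (1 : ℝ) ≤ (n : ℝ) := by exact_mod_cast hn1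
    nlinarith
  have key : ∀ (β γ : ℂ) (m₁ m₂ : ℕ), NOL.Walk ω N ρ E m₁ α₀ β → NOL.Walk ω N ρ E m₂ α₀ γ →
      ∃ k : Fin d → ℤ, (∑ i, |k i| : ℤ) ≤ ((n * N : ℕ) : ℤ) ∧
        ‖(2 * Real.pi * Complex.I * ((∑ i, (k i : ℝ) * ω i : ℝ) : ℂ)
          - (β - (if (m₁ + m₂) % 2 = 1 then (starRingEnd ℂ) γ else γ)))‖ < (n : ℝ) * ρ := by
    intro β γ m₁ m₂ w₁ w₂
    have w : NOL.Walk ω N ρ E (m₁ + m₂) β γ := NOL.walk_trans (NOL.walk_symm w₁) w₂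
    obtain ⟨m', hm'card, w'⟩ := NOL.walk_shorten w
    have hpareq : m' % 2 = (m₁ + m₂) % 2 := hpar β γ m' (m₁ + m₂) w' w
    have hm'n : m' ≤ n := by omega
    by_cases hm0 : m' = 0
    · have hβγ : β = γ := by
        obtain ⟨g, h0, hgm, -, -⟩ := w'
        rw [hm0] at hgm
        rw [← h0, ← hgm]
      have hifeq : (if (m₁ + m₂) % 2 = 1 then (starRingEnd ℂ) γ else γ) = γ := by
        rw [if_neg (by omega)]
      refine ⟨0, by simpa using Int.ofNat_nonneg (n * N), ?_⟩
      rw [hifeq, hβγ]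
      simpa using hnpos
    · have hm1 : 1 ≤ m' := by omega
      obtain ⟨k, hk, habs⟩ := NOL.walk_telescope hm1 w' hρ
      refine ⟨k, le_trans hk ?_, ?_⟩
      · push_cast
        have : (m' : ℤ) ≤ (n : ℤ) := by exact_mod_cast hm'n
        nlinarith [Int.ofNat_nonneg N]
      · rw [hpareq] at habs
        refine lt_of_lt_of_le habs ?_
        have : (m' : ℝ) ≤ (n : ℝ) := by exact_mod_cast hm'n
        nlinarith
  refine ⟨S₁, S₂, Finset.union_sdiff_of_subset hS1sub, Finset.disjoint_sdiff,
    ?_, ?_, ?_, ?_, ?_⟩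
  · -- no two elements of S₁ linked
    intro β hβ γ hγ hlinked
    obtain ⟨hβE, m₁, hm₁, w₁⟩ := hs1 β hβ
    obtain ⟨hγE, m₂, hm₂, w₂⟩ := hs1 γ hγ
    have w₃ : NOL.Walk ω N ρ E (m₁ + 1) α₀ γ :=
      NOL.walk_trans w₁ (NOL.walk_single hβE hγE hlinked)
    have := hpar α₀ γ (m₁ + 1) m₂ w₃ w₂
    omega
  · -- no two elements of S₂ linked
    intro β hβ γ hγ hlinked
    obtain ⟨hβE, m₁, hm₁, w₁⟩ := hs2 β hβ
    obtain ⟨hγE, m₂, hm₂, w₂⟩ := hs2 γ hγ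
    have w₃ : NOL.Walk ω N ρ E (m₁ + 1) α₀ γ :=
      NOL.walk_trans w₁ (NOL.walk_single hβE hγE hlinked)
    have := hpar α₀ γ (m₁ + 1) m₂ w₃ w₂
    omega
  · -- S₁, S₁ : linked to conjugate
    intro β hβ γ hγ
    obtain ⟨hβE, m₁, hm₁, w₁⟩ := hs1 β hβ
    obtain ⟨hγE, m₂, hm₂, w₂⟩ := hs1 γ hγ
    obtain ⟨k, hk, habs⟩ := key β γ m₁ m₂ w₁ w₂
    refine ⟨k, hk, ?_⟩
    rw [if_neg (by omega)] at habs
    simpa [Complex.conj_conj] using habs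
  · -- S₂, S₂ : linked to conjugate
    intro β hβ γ hγ
    obtain ⟨hβE, m₁, hm₁, w₁⟩ := hs2 β hβ
    obtain ⟨hγE, m₂, hm₂, w₂⟩ := hs2 γ hγ
    obtain ⟨k, hk, habs⟩ := key β γ m₁ m₂ w₁ w₂
    refine ⟨k, hk, ?_⟩
    rw [if_neg (by omega)] at habs
    simpa [Complex.conj_conj] using habs
  · -- S₁, S₂ : linked directly
    intro β hβ γ hγ
    obtain ⟨hβE, m₁, hm₁, w₁⟩ := hs1 β hβ
    obtain ⟨hγE, m₂, hm₂, w₂⟩ := hs2 γ hγ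
    obtain ⟨k, hk, habs⟩ := key β γ m₁ m₂ w₁ w₂
    refine ⟨k, hk, ?_⟩
    rw [if_pos (by omega)] at habs
    exact habs
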